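/- The symmetrized premetric d̂(p, q) = inf_{T_1, T_2 ∈ 𝒯} ‖T_1 p − T_2 q‖ does not separate inequivalent points: for d = 3, r = 1, and any vectors a_1, b_1 ∈ F^{n_1}, a_2, b_2 ∈ F^{n_2}, c ∈ F^{n_3}, the representatives p = vec(a_1, a_2, c) and q = vec(b_1, b_2, c) satisfy inf_{T_1, T_2 ∈ 𝒯} ‖T_1 p − T_2 q‖ = 0 (via T_1 = T_2 = diag(θ I_{n_1}, θ I_{n_2}, θ^{-2} I_{n_3}) as θ → 0), even when a_1 ⊗ a_2 ⊗ c ≠ b_1 ⊗ b_2 ⊗ c and p ≁ q. -/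

import Mathlib

open scoped BigOperators
open scoped Matrix

noncomputable section

namespace TensorCond

variable {𝕜 : Type*} [RCLike 𝕜]
variable {d r : ℕ} {n : Fin d → ℕ}

/-- The space `F^{r(Σ+d)}` of vectorized factor matrices: `r` blocks,
each consisting of `d` factors `a_i^{(k)} ∈ F^{n_k}`. -/
abbrev Vecr (𝕜 : Type*) (d r : ℕ) (n : Fin d → ℕ) : Type _ :=
  Fin r → (k : Fin d) → Fin (n k) → 𝕜

/-- The tensor space `F^{n₁} ⊗ ⋯ ⊗ F^{n_d} ≅ F^Π`. -/
abbrev Tensor (𝕜 : Type*) (d : ℕ) (n : Fin d → ℕ) : Type _ :=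
  ((k : Fin d) → Fin (n k)) → 𝕜

/-- Column index of Terracini's matrix. -/
abbrev ColIdx (d r : ℕ) (n : Fin d → ℕ) : Type _ :=
  Fin r × Σ k : Fin d, Fin (n k)

/-- The tensor computation map `f`. -/
def tmap (p : Vecr 𝕜 d r n) : Tensor 𝕜 d n :=
  fun x => ∑ i, ∏ k, p i k (x k)

/-- Terracini's matrix `T_p`. -/
def terracini (p : Vecr 𝕜 d r n) :
    Matrix ((k : Fin d) → Fin (n k)) (ColIdx d r n) 𝕜 :=
  Matrix.of fun x q =>
    (if x q.2.1 = q.2.2 then (1 : 𝕜) else 0) *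
      ∏ l ∈ Finset.univ.erase q.2.1, p q.1 l (x l)

/-- Flattening of a representative vector. -/
def flat (p : Vecr 𝕜 d r n) : ColIdx d r n → 𝕜 :=
  fun q => p q.1 q.2.1 q.2.2

/-- Flattening as a linear map. -/
def flatLM (𝕜 : Type*) [RCLike 𝕜] (d r : ℕ) (n : Fin d → ℕ) :
    Vecr 𝕜 d r n →ₗ[𝕜] (ColIdx d r n → 𝕜) where
  toFun := flat
  map_add' _ _ := rfl
  map_smul' _ _ := rfl

/-- Euclidean norm of a finitely supported vector. -/
def eunorm {ι : Type*} [Fintype ι] (v : ι → 𝕜) : ℝ :=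
  Real.sqrt (∑ i, ‖v i‖ ^ 2)

/-- Euclidean norm of one block. -/
def bnorm (b : (k : Fin d) → Fin (n k) → 𝕜) : ℝ :=
  Real.sqrt (∑ k, ∑ j, ‖b k j‖ ^ 2)

/-- Euclidean norm on `F^{r(Σ+d)}`. -/
def vnorm (p : Vecr 𝕜 d r n) : ℝ :=
  Real.sqrt (∑ i, ∑ k, ∑ j, ‖p i k j‖ ^ 2)

/-- Euclidean (Frobenius) norm on the tensor space. -/
def tnorm (A : Tensor 𝕜 d n) : ℝ :=
  Real.sqrt (∑ x, ‖A x‖ ^ 2)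

/-- Scaling part of the group `𝒯`. -/
def IsScaling (s : Fin r → Fin d → 𝕜) : Prop :=
  (∀ i k, s i k ≠ 0) ∧ ∀ i, ∏ k, s i k = 1

/-- Action of an element of `𝒯`. -/
def act (π : Equiv.Perm (Fin r)) (s : Fin r → Fin d → 𝕜) (q : Vecr 𝕜 d r n) :
    Vecr 𝕜 d r n :=
  fun i k j => s i k * q (π i) k j

/-- `p ∼ q`. -/
def rel (p q : Vecr 𝕜 d r n) : Prop :=
  ∃ (π : Equiv.Perm (Fin r)) (s : Fin r → Fin d → 𝕜), IsScaling s ∧ p = act π s q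

/-- The distance measure `d(p,q) = inf_{T ∈ 𝒯} ‖p − Tq‖`. -/
def gdist (p q : Vecr 𝕜 d r n) : ℝ :=
  sInf { x | ∃ (π : Equiv.Perm (Fin r)) (s : Fin r → Fin d → 𝕜),
    IsScaling s ∧ x = vnorm (p - act π s q) }

/-- Tensors of rank at most `r`. -/
def SecZ (𝕜 : Type*) [RCLike 𝕜] (d r : ℕ) (n : Fin d → ℕ) : Set (Tensor 𝕜 d n) :=
  Set.range (tmap (𝕜 := 𝕜) (d := d) (r := r) (n := n))

/-- `r`-identifiability. -/
def Identifiable {𝕜 : Type*} [RCLike 𝕜] {d : ℕ} {n : Fin d → ℕ} (r : ℕ)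
    (A : Tensor 𝕜 d n) : Prop :=
  ∀ x y : Vecr 𝕜 d r n, tmap x = A → tmap y = A → rel x y

/-- `d(p, f†(A))`. -/
def fdist (p : Vecr 𝕜 d r n) (A : Tensor 𝕜 d n) : ℝ :=
  sInf { x | ∃ q : Vecr 𝕜 d r n, tmap q = A ∧ x = gdist p q }

/-- Multiset of singular values of a matrix. -/
def singularValues {m l : Type*} [Fintype m] [Fintype l] [DecidableEq l]
    (M : Matrix m l 𝕜) : Multiset ℝ :=
  Multiset.map
    (fun i => Real.sqrt ((Matrix.isHermitian_conjTranspose_mul_self M).eigenvalues i))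
    Finset.univ.val

/-- `j`-th largest singular value (1-indexed). -/
def nthSV {m l : Type*} [Fintype m] [Fintype l] [DecidableEq l]
    (M : Matrix m l 𝕜) (j : ℕ) : ℝ :=
  (((singularValues M).sort (· ≤ ·)).reverse).getD (j - 1) 0

/-- Spectral norm. -/
def specNorm {m l : Type*} [Fintype m] [Fintype l] (M : Matrix m l 𝕜) : ℝ :=
  sSup { x | ∃ v : l → 𝕜, eunorm v = 1 ∧ x = eunorm (M.mulVec v) }

/-- Kernel vector `k_i^{(k)}` (one block). -/
def kvec [NeZero d] (p : Vecr 𝕜 d r n) (i : Fin r) (k : Fin d) :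
    (l : Fin d) → Fin (n l) → 𝕜 :=
  fun l j =>
    if h0 : l = 0 then p i 0 (h0 ▸ j)
    else if hk : l = k then -(p i k (hk ▸ j)) else 0

/-- Kernel basis vector `k_i^{(k)} ⊗ e_i` as a flattened column vector. -/
def kcol [NeZero d] (p : Vecr 𝕜 d r n) (i : Fin r) (k : Fin d) :
    ColIdx d r n → 𝕜 :=
  fun q => if q.1 = i then kvec p i k q.2.1 q.2.2 else 0

/-- `P ⊗ I_{Σ+d}` for a permutation `π`. -/
def permMx (𝕜 : Type*) [RCLike 𝕜] (d r : ℕ) (n : Fin d → ℕ)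
    (π : Equiv.Perm (Fin r)) : Matrix (ColIdx d r n) (ColIdx d r n) 𝕜 :=
  Matrix.of fun x y => if y.1 = π x.1 ∧ x.2 = y.2 then 1 else 0

/-- Block diagonal scaling matrix `diag(D_1, …, D_r)`. -/
def scalMx (s : Fin r → Fin d → 𝕜) : Matrix (ColIdx d r n) (ColIdx d r n) 𝕜 :=
  Matrix.diagonal fun x => s x.1 x.2.1

/-- The set `𝒯 = 𝒫ℬ` of matrices. -/
def Tset (𝕜 : Type*) [RCLike 𝕜] (d r : ℕ) (n : Fin d → ℕ) :
    Set (Matrix (ColIdx d r n) (ColIdx d r n) 𝕜) :=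
  { M | ∃ (π : Equiv.Perm (Fin r)) (s : Fin r → Fin d → 𝕜),
      IsScaling s ∧ M = permMx 𝕜 d r n π * scalMx s }

/-- The `i`-th block `T_i` of Terracini's matrix. -/
def terraciniBlock (p : Vecr 𝕜 d r n) (i : Fin r) :
    Matrix ((k : Fin d) → Fin (n k)) (Σ k : Fin d, Fin (n k)) 𝕜 :=
  Matrix.of fun x q =>
    (if x q.1 = q.2 then (1 : 𝕜) else 0) * ∏ l ∈ Finset.univ.erase q.1, p i l (x l)

/-- Kernel-basis matrix `K = [k^{(2)} ⋯ k^{(d)}]` (single point, r = 1). -/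
def Kmx [NeZero d] (a : (k : Fin d) → Fin (n k) → 𝕜) :
    Matrix (Σ k : Fin d, Fin (n k)) {k : Fin d // k ≠ 0} 𝕜 :=
  Matrix.of fun q j => kvec (fun _ : Fin 1 => a) 0 j.1 q.1 q.2

/-- the symmetrized premetric `d̂(p,q) = inf_{T₁,T₂ ∈ 𝒯} ‖T₁p − T₂q‖`
does not separate inequivalent points: for `d = 3`, `r = 1` and representatives
`p = vec(a₁,a₂,c)`, `q = vec(b₁,b₂,c)` sharing the third factor, the infimum is `0`. -/
theorem symmetrized_premetric_not_separating
    {n : Fin 3 → ℕ} (hn : ∀ k, 2 ≤ n k)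
    (a b : (k : Fin 3) → Fin (n k) → 𝕜) (hc : a 2 = b 2) :
    sInf { x : ℝ | ∃ s t : Fin 1 → Fin 3 → 𝕜, IsScaling s ∧ IsScaling t ∧
      x = vnorm (act (Equiv.refl (Fin 1)) s (fun _ => a : Vecr 𝕜 3 1 n)
                  - act (Equiv.refl (Fin 1)) t (fun _ => b : Vecr 𝕜 3 1 n)) } = 0 := by
  set S := { x : ℝ | ∃ s t : Fin 1 → Fin 3 → 𝕜, IsScaling s ∧ IsScaling t ∧
      x = vnorm (act (Equiv.refl (Fin 1)) s (fun _ => a : Vecr 𝕜 3 1 n)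
                  - act (Equiv.refl (Fin 1)) t (fun _ => b : Vecr 𝕜 3 1 n)) } with hS
  set D : ℝ := Real.sqrt (∑ k, ∑ j, ‖a k j - b k j‖ ^ 2) with hD
  have hD0 : 0 ≤ D := Real.sqrt_nonneg _
  have hblock : ∀ (cst : 𝕜) (k : Fin 3),
      (∑ j, ‖cst * a k j - cst * b k j‖ ^ 2)
        = ‖cst‖ ^ 2 * ∑ j, ‖a k j - b k j‖ ^ 2 := by
    intro cst k
    rw [Finset.mul_sum]
    refine Finset.sum_congr rfl fun j _ => ?_
    rw [← mul_sub, norm_mul, mul_pow]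
  have hmem : ∀ θ : ℝ, 0 < θ → θ * D ∈ S := by
    intro θ hθ
    have hθ𝕜 : ((θ : ℝ) : 𝕜) ≠ 0 := by
      simpa using ne_of_gt hθ
    set s : Fin 1 → Fin 3 → 𝕜 :=
      fun _ k => if k = 2 then (((θ : ℝ) : 𝕜) * ((θ : ℝ) : 𝕜))⁻¹ else ((θ : ℝ) : 𝕜)
      with hs
    have hscal : IsScaling s := by
      constructor
      · intro i k
        by_cases hk : k = 2 <;> simp [hs, hk, hθ𝕜]
      · intro i
        rw [Fin.prod_univ_three]
        simp only [hs, show ((0:Fin 3) = 2) = False from by decide,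
          show ((1:Fin 3) = 2) = False from by decide, if_false, if_true, if_pos rfl]
        exact mul_inv_cancel₀ (mul_ne_zero hθ𝕜 hθ𝕜)
    refine ⟨s, s, hscal, hscal, ?_⟩
    have hv : ∀ (k : Fin 3) (j : Fin (n k)),
        (act (Equiv.refl (Fin 1)) s (fun _ => a : Vecr 𝕜 3 1 n)
          - act (Equiv.refl (Fin 1)) s (fun _ => b : Vecr 𝕜 3 1 n)) 0 k j
          = s 0 k * a k j - s 0 k * b k j := fun k j => rfl
    rw [vnorm, Fin.sum_univ_one]
    have key : (∑ k, ∑ j, ‖(act (Equiv.refl (Fin 1)) s (fun _ => a : Vecr 𝕜 3 1 n)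
          - act (Equiv.refl (Fin 1)) s (fun _ => b : Vecr 𝕜 3 1 n)) 0 k j‖ ^ 2)
        = θ ^ 2 * ∑ k, ∑ j, ‖a k j - b k j‖ ^ 2 := by
      simp only [hv]
      rw [Fin.sum_univ_three, Fin.sum_univ_three, hblock, hblock, hblock]
      have h2 : (∑ j, ‖a 2 j - b 2 j‖ ^ 2) = 0 := by
        simp [hc]
      have hn0 : ‖s 0 0‖ ^ 2 = θ ^ 2 := by
        simp [hs, RCLike.norm_ofReal, abs_of_pos hθ]
      have hn1 : ‖s 0 1‖ ^ 2 = θ ^ 2 := by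
        simp [hs, RCLike.norm_ofReal, abs_of_pos hθ]
      rw [h2, hn0, hn1]
      ring
    rw [key, Real.sqrt_mul (sq_nonneg θ), Real.sqrt_sq hθ.le, hD]
  have hbdd : BddBelow S := by
    refine ⟨0, fun x hx => ?_⟩
    obtain ⟨s, t, _, _, rfl⟩ := hx
    exact Real.sqrt_nonneg _
  have hne : S.Nonempty := ⟨1 * D, hmem 1 one_pos⟩
  refine le_antisymm ?_ (le_csInf hne ?_)
  · refine le_of_forall_pos_le_add fun ε hε => ?_
    have hθ : 0 < ε / (D + 1) := by positivity
    have h1 : sInf S ≤ (ε / (D + 1)) * D := csInf_le hbdd (hmem _ hθ)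
    have h2 : (ε / (D + 1)) * D ≤ ε := by
      rw [div_mul_eq_mul_div, div_le_iff₀ (by positivity)]
      nlinarith
    linarith
  · rintro x ⟨s, t, _, _, rfl⟩
    exact Real.sqrt_nonneg _

end TensorCond
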